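/- arXiv:1807.04436 — 2 statements merged into one kernel-verified Lean document; each statement's English description precedes it below -/
import Mathlib

section
/- Decomposition of points in a sector along a steeper ray: Let 0 ≤ θ' < θ'' < π/2, let T > 0, and let t ∈ ℂ satisfy Re t = T and 0 ≤ arg t ≤ θ'. Set κ = 1 − tan θ'/tan θ''. Then there exists a real number t₁ with κT ≤ t₁ ≤ T such that t = t₁ + |t − t₁| e^{iθ''}. -/
open Real

/-- **Decomposition of points in a sector along a steeper ray** (proof of Proposition 5.5):
if `0 ≤ θ' < θ'' < π/2`, `T > 0`, `Re t = T` and `0 ≤ arg t ≤ θ'`, then with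
`κ = 1 − tan θ'/tan θ''` there is `t₁ ∈ [κT, T]` with `t = t₁ + |t − t₁| e^{iθ''}`. -/
theorem sector_point_decomposition
    (θ' θ'' : ℝ) (hθ'0 : 0 ≤ θ') (hθ : θ' < θ'') (hθ'' : θ'' < π / 2)
    (T : ℝ) (hT : 0 < T) (t : ℂ) (hre : t.re = T)
    (harg0 : 0 ≤ Complex.arg t) (harg1 : Complex.arg t ≤ θ') :
    ∃ t₁ : ℝ, (1 - Real.tan θ' / Real.tan θ'') * T ≤ t₁ ∧ t₁ ≤ T ∧
      t = (t₁ : ℂ) + (‖t - (t₁ : ℂ)‖ : ℂ) * Complex.exp ((θ'' : ℂ) * Complex.I) := by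
  have hθ''0 : 0 < θ'' := lt_of_le_of_lt hθ'0 hθ
  have hπ := Real.pi_pos
  have hs : 0 < Real.sin θ'' := Real.sin_pos_of_pos_of_lt_pi hθ''0 (by linarith)
  have hc : 0 < Real.cos θ'' := Real.cos_pos_of_mem_Ioo ⟨by linarith, hθ''⟩
  have htan : 0 < Real.tan θ'' := Real.tan_pos_of_pos_of_lt_pi_div_two hθ''0 hθ''
  set y := t.im with hy
  have hy0 : 0 ≤ y := Complex.arg_nonneg_iff.mp harg0
  have htanarg : Real.tan (Complex.arg t) = y / T := by
    rw [Complex.tan_arg, hre]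
  have hyle : y ≤ T * Real.tan θ' := by
    have h1 : Real.tan (Complex.arg t) ≤ Real.tan θ' := by
      rcases eq_or_lt_of_le harg1 with h | h
      · rw [h]
      · exact le_of_lt (Real.tan_lt_tan_of_lt_of_lt_pi_div_two (by linarith)
          (by linarith) h)
    rw [htanarg] at h1
    calc y = (y / T) * T := by field_simp
    _ ≤ Real.tan θ' * T := by nlinarith
    _ = T * Real.tan θ' := mul_comm _ _
  refine ⟨T - y / Real.tan θ'', ?_, ?_, ?_⟩
  · have h1 : y / Real.tan θ'' ≤ T * Real.tan θ' / Real.tan θ'' := by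
      exact div_le_div_of_nonneg_right hyle htan.le
    have h2 : T * Real.tan θ' / Real.tan θ'' = Real.tan θ' / Real.tan θ'' * T := by ring
    nlinarith [h1]
  · linarith [div_nonneg hy0 htan.le]
  · have hts : Real.tan θ'' = Real.sin θ'' / Real.cos θ'' := Real.tan_eq_sin_div_cos _
    have key : t - ((T - y / Real.tan θ'' : ℝ) : ℂ)
        = ((y / Real.sin θ'' : ℝ) : ℂ) * Complex.exp ((θ'' : ℂ) * Complex.I) := by
      have hA : T - (T - y / Real.tan θ'') = y / Real.sin θ'' * Real.cos θ'' := by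
        rw [hts]; field_simp; ring
      have hB : y = y / Real.sin θ'' * Real.sin θ'' := by field_simp
      rw [Complex.exp_mul_I, ← Complex.ofReal_cos, ← Complex.ofReal_sin]
      apply Complex.ext <;>
        simp only [Complex.sub_re, Complex.sub_im, Complex.mul_re, Complex.mul_im,
          Complex.add_re, Complex.add_im, Complex.ofReal_re, Complex.ofReal_im,
          Complex.I_re, Complex.I_im, mul_zero, mul_one, zero_mul, sub_zero, zero_add,
          add_zero, zero_sub, neg_zero]
      · rw [hre]; linarith [hA]
      · linarith [hB]
    have habs : ‖t - ((T - y / Real.tan θ'' : ℝ) : ℂ)‖ = y / Real.sin θ'' := by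
      rw [key, norm_mul, Complex.norm_exp_ofReal_mul_I, mul_one, Complex.norm_real, Real.norm_eq_abs,
        abs_of_nonneg (div_nonneg hy0 hs.le)]
    rw [habs]
    rw [← key]
    push_cast
    ring
end

section
/- Improved decay of boundary layer potentials with zero spatial mean in two dimensions: Let R₀ > 0 and let K ⊆ {y ∈ ℝ² : |y| ≤ R₀} be compact with ℋ¹(K) < ∞, where ℋ¹ is one-dimensional Hausdorff measure. Let C₀ > 0 and let W : (ℝ²∖{0}) × (0,∞) → ℝ^{2×2} be continuously differentiable in its first variable with |∇_z W(z,τ)| ≤ C₀ (|z| + √τ)^{−3} for all z ≠ 0 and τ > 0. Let t > 0 and let g : K × (0,t) → ℝ² be bounded and measurable with ∫_K g(y,s) dℋ¹(y) = 0 for every s ∈ (0,t). Then for every x ∈ ℝ² with |x| ≥ 2R₀, | ∫_0^t ∫_K W(x−y, t−s) g(y,s) dℋ¹(y) ds | ≤ 2 C₀ R₀ ℋ¹(K) (sup_{K×(0,t)} |g|) / |x|. -/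
open MeasureTheory Real
open scoped RealInnerProductSpace ENNReal NNReal Topology

noncomputable section

abbrev Euc (n : ℕ) := EuclideanSpace ℝ (Fin n)

def ebasis (n : ℕ) (i : Fin n) : Euc n := EuclideanSpace.single i 1

/-- Spatial divergence of a vector field. -/
def sdiv {n : ℕ} (f : Euc n → Euc n) (x : Euc n) : ℝ :=
  ∑ i, fderiv ℝ f x (ebasis n i) i

/-- Laplacian of a map into a normed space. -/
def slap {n : ℕ} {F : Type*} [NormedAddCommGroup F] [NormedSpace ℝ F]
    (f : Euc n → F) (x : Euc n) : F :=
  ∑ i, fderiv ℝ (fun y => fderiv ℝ f y (ebasis n i)) x (ebasis n i)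

/-- Exterior domain with `C³` boundary. -/
def IsExteriorDomainC3 {n : ℕ} (Ω : Set (Euc n)) : Prop :=
  IsOpen Ω ∧ IsCompact Ωᶜ ∧ Ωᶜ.Nonempty ∧
  ∀ x ∈ frontier Ω, ∃ ε > 0, ∃ ρ : Euc n → ℝ, ContDiff ℝ 3 ρ ∧
    (∀ y ∈ Metric.ball x ε, fderiv ℝ ρ y ≠ 0) ∧
    Ω ∩ Metric.ball x ε = {y ∈ Metric.ball x ε | ρ y < 0} ∧
    frontier Ω ∩ Metric.ball x ε = {y ∈ Metric.ball x ε | ρ y = 0}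

/-- A vector field `φ(x,t)` of class `C^{2,1}`: `φ`, `∂ₜφ`, `∇φ`, `∇²φ` exist and are
continuous (jointly in `(x,t)`). -/
def IsC21 {n : ℕ} (φ : Euc n → ℝ → Euc n) : Prop :=
  Continuous (fun p : Euc n × ℝ => φ p.1 p.2) ∧
  (∀ x, Differentiable ℝ (fun s => φ x s)) ∧
  Continuous (fun p : Euc n × ℝ => deriv (fun s => φ p.1 s) p.2) ∧
  (∀ t, Differentiable ℝ (fun y => φ y t)) ∧
  Continuous (fun p : Euc n × ℝ => fderiv ℝ (fun y => φ y p.2) p.1) ∧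
  (∀ t, Differentiable ℝ (fun y => fderiv ℝ (fun z => φ z t) y)) ∧
  Continuous (fun p : Euc n × ℝ => fderiv ℝ (fun y => fderiv ℝ (fun z => φ z p.2) y) p.1)

lemma time_integral_bound (a t : ℝ) (ha : 0 < a) (ht : 0 ≤ t) :
    ∫ τ in (0:ℝ)..t, ((a + Real.sqrt τ) ^ 3)⁻¹ ≤ 1 / a := by
  set F : ℝ → ℝ := fun τ => a / (a + Real.sqrt τ)^2 - 2 / (a + Real.sqrt τ) with hF
  have hpos : ∀ τ : ℝ, 0 < a + Real.sqrt τ := fun τ => by positivity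
  have hcs : Continuous fun τ : ℝ => a + Real.sqrt τ := continuous_const.add Real.continuous_sqrt
  have hFc : Continuous F :=
    (continuous_const.div (hcs.pow 2) fun τ => pow_ne_zero 2 (hpos τ).ne').sub
      (continuous_const.div hcs fun τ => (hpos τ).ne')
  have hint : IntervalIntegrable (fun τ => ((a + Real.sqrt τ) ^ 3)⁻¹) volume 0 t :=
    ((hcs.pow 3).inv₀ fun τ => pow_ne_zero 3 (hpos τ).ne').intervalIntegrable 0 t
  have hderiv : ∀ τ ∈ Set.Ioo (0:ℝ) t, HasDerivAt F (((a + Real.sqrt τ)^3)⁻¹) τ := by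
    intro τ hτ
    have hτ0 : 0 < τ := hτ.1
    have hsτ : (0:ℝ) < Real.sqrt τ := Real.sqrt_pos.mpr hτ0
    have hu : HasDerivAt (fun τ => a + Real.sqrt τ) (1 / (2 * Real.sqrt τ)) τ := by
      simpa using (Real.hasDerivAt_sqrt hτ0.ne').const_add a
    have hune : a + Real.sqrt τ ≠ 0 := (hpos τ).ne'
    have h1 := (hasDerivAt_const τ a).div (hu.pow 2) (pow_ne_zero 2 hune)
    have h2 := (hasDerivAt_const τ (2:ℝ)).div hu hune
    have h3 := h1.sub h2
    refine (h3.congr_of_eventuallyEq (Filter.Eventually.of_forall fun _ => rfl)).congr_deriv ?_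
    have h4 : Real.sqrt τ ≠ 0 := hsτ.ne'
    simp only [Pi.pow_apply]
    field_simp
    ring
  rw [intervalIntegral.integral_eq_sub_of_hasDeriv_right_of_le ht hFc.continuousOn
    (fun τ hτ => (hderiv τ hτ).hasDerivWithinAt) hint]
  have h0 : F 0 = -(1/a) := by
    simp only [hF, Real.sqrt_zero, add_zero]
    field_simp
    ring
  have hFt : F t ≤ 0 := sub_nonpos.mpr (by
    have hs := Real.sqrt_nonneg t
    have hu := hpos t
    rw [div_le_div_iff₀ (by positivity) hu]
    nlinarith)
  rw [h0]
  simp only [hF] at hFt ⊢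
  linarith


/-- **Improved decay of boundary layer potentials with zero spatial mean in two dimensions**
(proof of the remainder estimate (1.14)/(5.16)): if the kernel `W` satisfies
`|∇_z W(z,τ)| ≤ C₀(|z| + √τ)^{-3}` and the density `g` on `K ⊆ {|y| ≤ R₀}` has zero spatial
mean, then for `|x| ≥ 2R₀` the layer potential is bounded by
`2 C₀ R₀ H¹(K) (sup |g|) / |x|`. -/
theorem layer_potential_zero_mean_decay_2d
    (R₀ : ℝ) (hR₀ : 0 < R₀) (K : Set (Euc 2)) (hK : IsCompact K)
    (hKR : ∀ y ∈ K, ‖y‖ ≤ R₀) (hH : μH[(1:ℝ)] K < ⊤)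
    (C₀ : ℝ) (hC₀ : 0 < C₀)
    (W : Euc 2 → ℝ → (Euc 2 →L[ℝ] Euc 2))
    (hWdiff : ∀ τ : ℝ, 0 < τ → ∀ z : Euc 2, z ≠ 0 → DifferentiableAt ℝ (fun z' => W z' τ) z)
    (hWcont : ∀ τ : ℝ, 0 < τ →
      ContinuousOn (fun z => fderiv ℝ (fun z' => W z' τ) z) {(0 : Euc 2)}ᶜ)
    (hWbound : ∀ τ : ℝ, 0 < τ → ∀ z : Euc 2, z ≠ 0 →
      ‖fderiv ℝ (fun z' => W z' τ) z‖ ≤ C₀ * (‖z‖ + Real.sqrt τ) ^ (-(3:ℝ)))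
    (t : ℝ) (ht : 0 < t) (g : Euc 2 → ℝ → Euc 2)
    (hgmeas : Measurable (fun pt : Euc 2 × ℝ => g pt.1 pt.2))
    (G : ℝ) (hgbdd : ∀ y ∈ K, ∀ s ∈ Set.Ioo (0:ℝ) t, ‖g y s‖ ≤ G)
    (hgmean : ∀ s ∈ Set.Ioo (0:ℝ) t, ∫ y in K, g y s ∂(μH[(1:ℝ)]) = 0)
    (x : Euc 2) (hx : 2 * R₀ ≤ ‖x‖) :
    ‖∫ s in Set.Ioo (0:ℝ) t, (∫ y in K, (W (x - y) (t - s)) (g y s) ∂(μH[(1:ℝ)])) ∂volume‖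
      ≤ 2 * C₀ * R₀ * (μH[(1:ℝ)] K).toReal * G / ‖x‖ := by
  classical
  rcases Set.eq_empty_or_nonempty K with hKe | hKne
  · subst hKe
    simp
  set μ : Measure (Euc 2) := μH[(1:ℝ)] with hμdef
  obtain ⟨y₀, hy₀⟩ := hKne
  have hG : 0 ≤ G :=
    le_trans (norm_nonneg _) (hgbdd y₀ hy₀ (t/2) ⟨by linarith, by linarith⟩)
  have hxpos : 0 < ‖x‖ := by linarith
  set a : ℝ := ‖x‖ / 2 with ha
  have haR : R₀ ≤ a := by rw [ha]; linarith
  have ha0 : 0 < a := lt_of_lt_of_le hR₀ haR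
  have hKm : MeasurableSet K := hK.measurableSet
  set M : ℝ := (μ K).toReal with hM
  have hM0 : 0 ≤ M := ENNReal.toReal_nonneg
  -- inner estimate
  have key : ∀ s ∈ Set.Ioo (0:ℝ) t,
      ‖∫ y in K, (W (x - y) (t - s)) (g y s) ∂μ‖
        ≤ C₀ * R₀ * G * M * ((a + Real.sqrt (t - s)) ^ 3)⁻¹ := by
    intro s hs
    have hτ : 0 < t - s := by linarith [hs.2]
    set τ := t - s with hτdef
    have hzb : ∀ z : Euc 2, a ≤ ‖z‖ →
        ‖fderiv ℝ (fun z' => W z' τ) z‖ ≤ C₀ * ((a + Real.sqrt τ) ^ 3)⁻¹ := by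
      intro z hz
      have hz0 : z ≠ 0 := by
        intro h; rw [h, norm_zero] at hz; linarith
      refine (hWbound τ hτ z hz0).trans ?_
      have h1 : (‖z‖ + Real.sqrt τ) ^ (-(3:ℝ)) ≤ (a + Real.sqrt τ) ^ (-(3:ℝ)) :=
        Real.rpow_le_rpow_of_nonpos (by positivity) (by linarith) (by norm_num)
      have h2 : (a + Real.sqrt τ) ^ (-(3:ℝ)) = ((a + Real.sqrt τ) ^ 3)⁻¹ := by
        rw [Real.rpow_neg (by positivity), show ((3:ℝ)) = ((3:ℕ):ℝ) by norm_num,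
          Real.rpow_natCast]
      rw [← h2]
      exact mul_le_mul_of_nonneg_left h1 hC₀.le
    -- points of the segment have norm ≥ a
    have hsubseg : ∀ y ∈ K, ∀ z ∈ segment ℝ (x - y) x, a ≤ ‖z‖ := by
      intro y hy z hz
      rw [segment_eq_image] at hz
      obtain ⟨θ, hθ, rfl⟩ := hz
      have hyR := hKR y hy
      have heq : (1 - θ) • (x - y) + θ • x = x - (1 - θ) • y := by module
      show a ≤ ‖(1 - θ) • (x - y) + θ • x‖
      rw [heq]
      have h1 : ‖(1 - θ) • y‖ ≤ ‖y‖ := by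
        rw [norm_smul]
        have : |1 - θ| ≤ 1 := by
          rw [abs_le]; constructor <;> [linarith [hθ.2]; linarith [hθ.1]]
        calc |1 - θ| * ‖y‖ ≤ 1 * ‖y‖ :=
              mul_le_mul_of_nonneg_right this (norm_nonneg _)
          _ = ‖y‖ := one_mul _
      have h2 := norm_sub_norm_le x ((1 - θ) • y)
      have : a ≤ ‖x‖ - R₀ := by rw [ha]; linarith
      linarith
    have hseg : ∀ y ∈ K,
        ‖W x τ - W (x - y) τ‖ ≤ C₀ * ((a + Real.sqrt τ) ^ 3)⁻¹ * ‖y‖ := by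
      intro y hy
      have h := (convex_segment (x - y) x).norm_image_sub_le_of_norm_fderiv_le
        (fun z hz => hWdiff τ hτ z (by
          intro h0; have := hsubseg y hy z hz; rw [h0, norm_zero] at this; linarith))
        (fun z hz => hzb z (hsubseg y hy z hz))
        (left_mem_segment ℝ (x - y) x) (right_mem_segment ℝ (x - y) x)
      simpa [sub_sub_cancel] using h
    -- measurability / integrability
    have hgm : Measurable fun y => g y s :=
      hgmeas.comp (measurable_id.prodMk measurable_const)
    have hgInt : IntegrableOn (fun y => g y s) K μ := by
      refine Measure.integrableOn_of_bounded (M := G) hH.ne hgm.aestronglyMeasurable ?_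
      filter_upwards [ae_restrict_mem hKm] with y hy using hgbdd y hy s hs
    have hφc : ContinuousOn (fun y : Euc 2 => W (x - y) τ) K := by
      intro y hy
      have hne : x - y ≠ 0 := by
        intro h0
        have := hsubseg y hy (x - y) (left_mem_segment ℝ (x - y) x)
        rw [h0, norm_zero] at this; linarith
      have hd : DifferentiableAt ℝ (fun z' => W z' τ) (x - y) := hWdiff τ hτ _ hne
      exact ((hd.continuousAt.comp
        ((continuous_const.sub continuous_id).continuousAt)).continuousWithinAt)
    have hφm : AEStronglyMeasurable (fun y : Euc 2 => W (x - y) τ) (μ.restrict K) :=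
      hφc.aestronglyMeasurable hKm
    have happly : Continuous fun p : (Euc 2 →L[ℝ] Euc 2) × Euc 2 => p.1 p.2 :=
      isBoundedBilinearMap_apply.continuous
    have hhm : AEStronglyMeasurable (fun y => (W (x - y) τ) (g y s)) (μ.restrict K) :=
      happly.comp_aestronglyMeasurable
        (hφm.prodMk (hgm.aestronglyMeasurable.restrict))
    obtain ⟨Cw, hCw⟩ := hK.exists_bound_of_continuousOn hφc
    have hCw0 : 0 ≤ Cw := le_trans (norm_nonneg _) (hCw y₀ hy₀)
    have hhInt : IntegrableOn (fun y => (W (x - y) τ) (g y s)) K μ := by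
      refine ⟨hhm, HasFiniteIntegral.restrict_of_bounded (Cw * G) hH ?_⟩
      filter_upwards [ae_restrict_mem hKm] with y hy
      exact (ContinuousLinearMap.le_opNorm _ _).trans
        (mul_le_mul (hCw y hy) (hgbdd y hy s hs) (norm_nonneg _) hCw0)
    have hWxInt : IntegrableOn (fun y => (W x τ) (g y s)) K μ :=
      (W x τ).integrable_comp hgInt
    have hWx0 : ∫ y in K, (W x τ) (g y s) ∂μ = 0 := by
      rw [ContinuousLinearMap.integral_comp_comm _ hgInt, hgmean s hs, map_zero]
    have hsplit : ∫ y in K, (W (x - y) τ) (g y s) ∂μ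
        = ∫ y in K, ((W (x - y) τ) (g y s) - (W x τ) (g y s)) ∂μ := by
      rw [integral_sub hhInt hWxInt, hWx0, sub_zero]
    rw [hsplit]
    have hb : ∀ y ∈ K, ‖(W (x - y) τ) (g y s) - (W x τ) (g y s)‖
        ≤ C₀ * ((a + Real.sqrt τ) ^ 3)⁻¹ * R₀ * G := by
      intro y hy
      have h1 : ‖W (x - y) τ - W x τ‖ ≤ C₀ * ((a + Real.sqrt τ) ^ 3)⁻¹ * ‖y‖ := by
        rw [norm_sub_rev]; exact hseg y hy
      calc ‖(W (x - y) τ) (g y s) - (W x τ) (g y s)‖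
          = ‖(W (x - y) τ - W x τ) (g y s)‖ := by rw [ContinuousLinearMap.sub_apply]
        _ ≤ ‖W (x - y) τ - W x τ‖ * ‖g y s‖ := ContinuousLinearMap.le_opNorm _ _
        _ ≤ (C₀ * ((a + Real.sqrt τ) ^ 3)⁻¹ * ‖y‖) * G :=
            mul_le_mul h1 (hgbdd y hy s hs) (norm_nonneg _) (by positivity)
        _ ≤ C₀ * ((a + Real.sqrt τ) ^ 3)⁻¹ * R₀ * G := by
            have hyR := hKR y hy
            have hpos3 : (0:ℝ) ≤ C₀ * ((a + Real.sqrt τ) ^ 3)⁻¹ := by positivity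
            exact mul_le_mul_of_nonneg_right
              (mul_le_mul_of_nonneg_left hyR hpos3) hG
    calc ‖∫ y in K, ((W (x - y) τ) (g y s) - (W x τ) (g y s)) ∂μ‖
        ≤ C₀ * ((a + Real.sqrt τ) ^ 3)⁻¹ * R₀ * G * M :=
          norm_setIntegral_le_of_norm_le_const hH hb
      _ = C₀ * R₀ * G * M * ((a + Real.sqrt τ) ^ 3)⁻¹ := by ring
  -- outer estimate
  have hcs : Continuous fun τ : ℝ => a + Real.sqrt τ := continuous_const.add Real.continuous_sqrt
  have hBc : Continuous fun s : ℝ => C₀ * R₀ * G * M * ((a + Real.sqrt (t - s)) ^ 3)⁻¹ := by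
    refine continuous_const.mul ?_
    exact (((hcs.comp (continuous_const.sub continuous_id)).pow 3).inv₀
      fun s => pow_ne_zero 3 (by
        have := Real.sqrt_nonneg (t - s)
        show a + Real.sqrt (t - s) ≠ 0
        intro h0; rw [← h0] at this; linarith))
  have hbdInt : IntegrableOn
      (fun s : ℝ => C₀ * R₀ * G * M * ((a + Real.sqrt (t - s)) ^ 3)⁻¹) (Set.Ioo 0 t) volume :=
    (hBc.integrableOn_Icc (a := 0) (b := t)).mono_set Set.Ioo_subset_Icc_self
  have htime : ∫ s in Set.Ioo (0:ℝ) t, ((a + Real.sqrt (t - s)) ^ 3)⁻¹ ≤ 1 / a := by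
    have heq : ∫ s in Set.Ioo (0:ℝ) t, ((a + Real.sqrt (t - s)) ^ 3)⁻¹
        = ∫ τ in (0:ℝ)..t, ((a + Real.sqrt τ) ^ 3)⁻¹ := by
      rw [← integral_Ioc_eq_integral_Ioo, ← intervalIntegral.integral_of_le ht.le,
        intervalIntegral.integral_comp_sub_left (fun τ => ((a + Real.sqrt τ) ^ 3)⁻¹) t,
        sub_self, sub_zero]
    rw [heq]
    exact time_integral_bound a t ha0 ht.le
  calc ‖∫ s in Set.Ioo (0:ℝ) t, (∫ y in K, (W (x - y) (t - s)) (g y s) ∂μ) ∂volume‖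
      ≤ ∫ s in Set.Ioo (0:ℝ) t, ‖∫ y in K, (W (x - y) (t - s)) (g y s) ∂μ‖ ∂volume :=
        norm_integral_le_integral_norm _
    _ ≤ ∫ s in Set.Ioo (0:ℝ) t, C₀ * R₀ * G * M * ((a + Real.sqrt (t - s)) ^ 3)⁻¹ ∂volume := by
        refine integral_mono_of_nonneg (Filter.Eventually.of_forall fun s => norm_nonneg _)
          hbdInt ?_
        filter_upwards [ae_restrict_mem measurableSet_Ioo] with s hs using key s hs
    _ = C₀ * R₀ * G * M * ∫ s in Set.Ioo (0:ℝ) t, ((a + Real.sqrt (t - s)) ^ 3)⁻¹ ∂volume :=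
        integral_const_mul _ _
    _ ≤ C₀ * R₀ * G * M * (1 / a) :=
        mul_le_mul_of_nonneg_left htime
          (mul_nonneg (mul_nonneg (mul_nonneg hC₀.le hR₀.le) hG) hM0)
    _ = 2 * C₀ * R₀ * M * G / ‖x‖ := by
        rw [ha]; field_simp
end
end
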